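/- Let R be a domain, n ≥ 1, B = R[x₁^{±1},…,xₙ^{±1}] the Laurent polynomial ring in n variables over R, and A an R-subalgebra of B generated as an R-algebra by monic monomials (i.e., by elements x^a for a in some subset of ℤⁿ). Let S = A ∩ B^× and let S⁻¹A = {b ∈ B : s·b ∈ A for some s ∈ S}. Then A is quasi-factorially closed in B if and only if Gap(S⁻¹A) = ∅. -/

import Mathlib

/-- An `R`-subalgebra `A` of `B` is quasi-factorially closed (qfc) in `B`. -/
def IsQfc {R B : Type*} [CommSemiring R] [CommRing B] [Algebra R B] (A : Subalgebra R B) : Prop :=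
  ∀ a b : B, a ≠ 0 → b ≠ 0 → a * b ∈ A →
    ∃ u v : Bˣ, (u : B) * a ∈ A ∧ (v : B) * b ∈ A

/-- The cone of a subset `D ⊆ ℤⁿ` in `ℝⁿ`. -/
def coneOf {n : ℕ} (D : Set (Fin n → ℤ)) : Set (Fin n → ℝ) :=
  {x | ∃ c : (Fin n → ℤ) →₀ ℝ, (↑c.support : Set (Fin n → ℤ)) ⊆ D ∧ (∀ a, 0 ≤ c a) ∧
      x = c.sum fun a t => t • fun i => ((a i : ℝ))}

/-- `M(A)`: the set of `a ∈ ℤⁿ` with `x^a ∈ A`. -/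
def monSet {R : Type*} [CommRing R] {n : ℕ}
    (A : Set (AddMonoidAlgebra R (Fin n → ℤ))) : Set (Fin n → ℤ) :=
  {a | AddMonoidAlgebra.of' R (Fin n → ℤ) a ∈ A}

/-- `S(A)`: the union of the supports of the elements of `A`. -/
def suppSet {R : Type*} [CommRing R] {n : ℕ}
    (A : Set (AddMonoidAlgebra R (Fin n → ℤ))) : Set (Fin n → ℤ) :=
  {a | ∃ f ∈ A, a ∈ f.coeff.support}

/-- `C(A)`: lattice points of `ℤⁿ` in the cone generated by `S(A)`. -/
def latticeCone {R : Type*} [CommRing R] {n : ℕ}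
    (A : Set (AddMonoidAlgebra R (Fin n → ℤ))) : Set (Fin n → ℤ) :=
  {a | (fun i => (a i : ℝ)) ∈ coneOf (suppSet A)}

/-- The gap set `Gap(A) = C(A) \ M(A)`. -/
def gapSet {R : Type*} [CommRing R] {n : ℕ}
    (A : Set (AddMonoidAlgebra R (Fin n → ℤ))) : Set (Fin n → ℤ) :=
  latticeCone A \ monSet A

/-- The localization `S⁻¹A` of `A` at `S = A ∩ B^×`, identified with an `R`-subalgebra of `B`. -/
def locSet {B : Type*} [CommRing B] (A : Set B) : Set B :=
  {b | ∃ s ∈ A, IsUnit s ∧ s * b ∈ A}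

section QfcAux

open Finsupp AddMonoidAlgebra

variable {R : Type*} [CommRing R] [IsDomain R] {n : ℕ}

theorem qfc_sup_mul (φ : (Fin n → ℤ) →+ ℤ) {f g : AddMonoidAlgebra R (Fin n → ℤ)}
    (h1 : (f * g).coeff.support.Nonempty) (h2 : f.coeff.support.Nonempty) (h3 : g.coeff.support.Nonempty) :
    (f * g).coeff.support.sup' h1 φ = f.coeff.support.sup' h2 φ + g.coeff.support.sup' h3 φ := by
  classical
  set Tf := f.coeff.support.sup' h2 φ with hTf
  set Tg := g.coeff.support.sup' h3 φ with hTg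
  set f1 : AddMonoidAlgebra R (Fin n → ℤ) := AddMonoidAlgebra.ofCoeff (f.coeff.filter (fun a => φ a = Tf)) with hf1
  set g1 : AddMonoidAlgebra R (Fin n → ℤ) := AddMonoidAlgebra.ofCoeff (g.coeff.filter (fun a => φ a = Tg)) with hg1
  set f2 : AddMonoidAlgebra R (Fin n → ℤ) := AddMonoidAlgebra.ofCoeff (f.coeff.filter (fun a => ¬ φ a = Tf)) with hf2
  set g2 : AddMonoidAlgebra R (Fin n → ℤ) := AddMonoidAlgebra.ofCoeff (g.coeff.filter (fun a => ¬ φ a = Tg)) with hg2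
  have hfsplit : f1 + f2 = f := AddMonoidAlgebra.coeff_injective (Finsupp.filter_pos_add_filter_neg f.coeff _)
  have hgsplit : g1 + g2 = g := AddMonoidAlgebra.coeff_injective (Finsupp.filter_pos_add_filter_neg g.coeff _)
  have hf1supp : ∀ a ∈ f1.coeff.support, φ a = Tf := by
    intro a ha; rw [hf1, AddMonoidAlgebra.coeff_ofCoeff, Finsupp.support_filter, Finset.mem_filter] at ha; exact ha.2
  have hg1supp : ∀ a ∈ g1.coeff.support, φ a = Tg := by
    intro a ha; rw [hg1, AddMonoidAlgebra.coeff_ofCoeff, Finsupp.support_filter, Finset.mem_filter] at ha; exact ha.2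
  have hf2supp : ∀ a ∈ f2.coeff.support, φ a < Tf := by
    intro a ha
    rw [hf2, AddMonoidAlgebra.coeff_ofCoeff, Finsupp.support_filter, Finset.mem_filter] at ha
    exact lt_of_le_of_ne (Finset.le_sup' φ ha.1) ha.2
  have hg2supp : ∀ a ∈ g2.coeff.support, φ a < Tg := by
    intro a ha
    rw [hg2, AddMonoidAlgebra.coeff_ofCoeff, Finsupp.support_filter, Finset.mem_filter] at ha
    exact lt_of_le_of_ne (Finset.le_sup' φ ha.1) ha.2
  have hfa : ∀ a ∈ f.coeff.support, φ a ≤ Tf := fun a ha => Finset.le_sup' φ ha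
  have hga : ∀ a ∈ g.coeff.support, φ a ≤ Tg := fun a ha => Finset.le_sup' φ ha
  have hf1ne : f1 ≠ 0 := by
    obtain ⟨a, ha, hEq⟩ := Finset.exists_mem_eq_sup' h2 φ
    intro h0
    have : a ∈ f1.coeff.support := by
      rw [hf1, AddMonoidAlgebra.coeff_ofCoeff, Finsupp.support_filter, Finset.mem_filter]; exact ⟨ha, hEq.symm⟩
    rw [h0] at this; simp at this
  have hg1ne : g1 ≠ 0 := by
    obtain ⟨a, ha, hEq⟩ := Finset.exists_mem_eq_sup' h3 φ
    intro h0
    have : a ∈ g1.coeff.support := by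
      rw [hg1, AddMonoidAlgebra.coeff_ofCoeff, Finsupp.support_filter, Finset.mem_filter]; exact ⟨ha, hEq.symm⟩
    rw [h0] at this; simp at this
  have hsupp_mul : ∀ (x y : AddMonoidAlgebra R (Fin n → ℤ)), ∀ d ∈ (x*y).coeff.support,
      ∃ a ∈ x.coeff.support, ∃ b ∈ y.coeff.support, a + b = d := by
    intro x y d hd
    have := AddMonoidAlgebra.support_coeff_mul_subset x y hd
    rwa [Finset.mem_add] at this
  have hsplitmul : f * g = f1 * g1 + (f1 * g2 + f2 * g) := by
    rw [← hfsplit, ← hgsplit]; ring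
  have claim : ∀ d : Fin n → ℤ, φ d = Tf + Tg → (f * g).coeff d = (f1 * g1).coeff d := by
    intro d hd
    have hh1 : (f1 * g2).coeff d = 0 := by
      by_contra h0
      obtain ⟨a, ha, b, hb, hab⟩ := hsupp_mul f1 g2 d (Finsupp.mem_support_iff.2 h0)
      have : φ d < Tf + Tg := by
        rw [← hab, map_add, hf1supp a ha]
        exact add_lt_add_right (hg2supp b hb) _
      omega
    have hh2 : (f2 * g).coeff d = 0 := by
      by_contra h0
      obtain ⟨a, ha, b, hb, hab⟩ := hsupp_mul f2 g d (Finsupp.mem_support_iff.2 h0)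
      have : φ d < Tf + Tg := by
        rw [← hab, map_add]
        exact add_lt_add_of_lt_of_le (hf2supp a ha) (hga b hb)
      omega
    rw [hsplitmul, AddMonoidAlgebra.coeff_add, Finsupp.add_apply, AddMonoidAlgebra.coeff_add, Finsupp.add_apply, hh1, hh2, add_zero, add_zero]
  have hne : f1 * g1 ≠ 0 := mul_ne_zero hf1ne hg1ne
  obtain ⟨d, hd⟩ := Finsupp.support_nonempty_iff.2 (mt AddMonoidAlgebra.coeff_eq_zero.1 hne)
  obtain ⟨a, ha, b, hb, hab⟩ := hsupp_mul f1 g1 d hd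
  have hφd : φ d = Tf + Tg := by rw [← hab, map_add, hf1supp a ha, hg1supp b hb]
  have hdmem : d ∈ (f * g).coeff.support := by
    rw [Finsupp.mem_support_iff, claim d hφd]
    exact Finsupp.mem_support_iff.1 hd
  apply le_antisymm
  · apply Finset.sup'_le
    intro e he
    obtain ⟨a, ha, b, hb, hab⟩ := hsupp_mul f g e he
    rw [← hab, map_add]
    exact add_le_add (hfa a ha) (hga b hb)
  · calc Tf + Tg = φ d := hφd.symm
      _ ≤ _ := Finset.le_sup' φ hdmem

theorem qfc_phi_const (φ : (Fin n → ℤ) →+ ℤ) {f g : AddMonoidAlgebra R (Fin n → ℤ)}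
    (hf : f ≠ 0) (hg : g ≠ 0) (h0 : ∀ d ∈ (f * g).coeff.support, φ d = 0)
    {c c' : Fin n → ℤ} (hc : c ∈ f.coeff.support) (hc' : c' ∈ f.coeff.support) : φ c = φ c' := by
  have h2 : f.coeff.support.Nonempty := Finsupp.support_nonempty_iff.2 (mt AddMonoidAlgebra.coeff_eq_zero.1 hf)
  have h3 : g.coeff.support.Nonempty := Finsupp.support_nonempty_iff.2 (mt AddMonoidAlgebra.coeff_eq_zero.1 hg)
  have h1 : (f * g).coeff.support.Nonempty := Finsupp.support_nonempty_iff.2 (mt AddMonoidAlgebra.coeff_eq_zero.1 (mul_ne_zero (M₀ := AddMonoidAlgebra R (Fin n → ℤ)) hf hg))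
  have key₁ := qfc_sup_mul φ h1 h2 h3
  have key₂ := qfc_sup_mul (-φ) h1 h2 h3
  have hz : ∀ ψ : (Fin n → ℤ) →+ ℤ, (∀ d ∈ (f*g).coeff.support, ψ d = 0) →
      (f * g).coeff.support.sup' h1 ψ = 0 := by
    intro ψ hψ
    apply le_antisymm
    · exact Finset.sup'_le _ _ fun d hd => le_of_eq (hψ d hd)
    · obtain ⟨d, hd⟩ := h1
      calc (0:ℤ) = ψ d := (hψ d hd).symm
        _ ≤ _ := Finset.le_sup' _ hd
  rw [hz φ h0] at key₁
  rw [hz (-φ) (by intro d hd; simp [h0 d hd])] at key₂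
  have hnn : ∀ (x : AddMonoidAlgebra R (Fin n → ℤ)) (hx : x.coeff.support.Nonempty),
      0 ≤ x.coeff.support.sup' hx φ + x.coeff.support.sup' hx (-φ) := by
    intro x hx
    obtain ⟨d, hd⟩ := id hx
    have l1 : φ d ≤ x.coeff.support.sup' hx φ := Finset.le_sup' _ hd
    have l2 : -φ d ≤ x.coeff.support.sup' hx (-φ) := by
      have := Finset.le_sup' (α := ℤ) (-φ) hd
      exact this
    omega
  have e1 : f.coeff.support.sup' h2 φ + f.coeff.support.sup' h2 (-φ) = 0 := by
    have n1 := hnn f h2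
    have n2 := hnn g h3
    omega
  have l1 : φ c ≤ f.coeff.support.sup' h2 φ := Finset.le_sup' _ hc
  have l1' : -φ c ≤ f.coeff.support.sup' h2 (-φ) := by exact Finset.le_sup' (α := ℤ) (-φ) hc
  have l2 : φ c' ≤ f.coeff.support.sup' h2 φ := Finset.le_sup' _ hc'
  have l2' : -φ c' ≤ f.coeff.support.sup' h2 (-φ) := by exact Finset.le_sup' (α := ℤ) (-φ) hc'
  omega

theorem qfc_unit_single {u : AddMonoidAlgebra R (Fin n → ℤ)} (hu : IsUnit u) :
    ∃ (e : Fin n → ℤ) (r : R), r ≠ 0 ∧ u = AddMonoidAlgebra.single e r := by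
  obtain ⟨v, hv⟩ := IsUnit.exists_right_inv hu
  have hune : u ≠ 0 := by
    rintro rfl; rw [zero_mul] at hv; exact one_ne_zero hv.symm
  have hvne : v ≠ 0 := by
    rintro rfl; rw [mul_zero] at hv; exact one_ne_zero hv.symm
  have hsupp1 : ∀ d ∈ (u * v).coeff.support, ∀ φ : (Fin n → ℤ) →+ ℤ, φ d = 0 := by
    intro d hd φ
    rw [hv] at hd
    rw [AddMonoidAlgebra.one_def, AddMonoidAlgebra.coeff_single, Finsupp.support_single_ne_zero _ one_ne_zero,
      Finset.mem_singleton] at hd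
    rw [hd, map_zero]
  have hconst : ∀ c ∈ u.coeff.support, ∀ c' ∈ u.coeff.support, c = c' := by
    intro c hc c' hc'
    funext i
    have := qfc_phi_const (Pi.evalAddMonoidHom (fun _ : Fin n => ℤ) i) hune hvne
      (fun d hd => hsupp1 d hd _) hc hc'
    simpa using this
  obtain ⟨e, he⟩ := Finsupp.support_nonempty_iff.2 (mt AddMonoidAlgebra.coeff_eq_zero.1 hune)
  have hsub : u.coeff.support ⊆ {e} := by
    intro c hc; rw [Finset.mem_singleton]; exact hconst c hc e he
  refine ⟨e, u.coeff e, Finsupp.mem_support_iff.1 he, ?_⟩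
  exact AddMonoidAlgebra.coeff_injective (Finsupp.support_subset_singleton.1 hsub)

theorem qfc_mem_adjoin_iff (D : Set (Fin n → ℤ)) (f : AddMonoidAlgebra R (Fin n → ℤ)) :
    f ∈ Algebra.adjoin R (AddMonoidAlgebra.of' R (Fin n → ℤ) '' D) ↔
      ↑f.coeff.support ⊆ (AddSubmonoid.closure D : Set (Fin n → ℤ)) := by
  constructor
  · intro hf
    let S : Subalgebra R (AddMonoidAlgebra R (Fin n → ℤ)) :=
      { carrier := {f : AddMonoidAlgebra R (Fin n → ℤ) |
          ↑f.coeff.support ⊆ (AddSubmonoid.closure D : Set (Fin n → ℤ))}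
        mul_mem' := by
          intro a b ha hb d hd
          classical
          have := AddMonoidAlgebra.support_coeff_mul_subset a b hd
          rw [Finset.mem_add] at this
          obtain ⟨x, hx, y, hy, hxy⟩ := this
          rw [← hxy]
          exact add_mem (ha hx) (hb hy)
        add_mem' := by
          intro a b ha hb d hd
          have := Finsupp.support_add (g₁ := a.coeff) (g₂ := b.coeff) hd
          rw [Finset.mem_union] at this
          rcases this with h | h
          · exact ha h
          · exact hb h
        algebraMap_mem' := by
          intro r d hd
          have h1 : (algebraMap R (AddMonoidAlgebra R (Fin n → ℤ)) r) = r • 1 :=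
            Algebra.algebraMap_eq_smul_one r
          rw [h1] at hd
          have h2 := Finsupp.support_smul hd
          rw [AddMonoidAlgebra.one_def] at h2
          have h3 := Finsupp.support_single_subset h2
          rw [Finset.mem_singleton] at h3
          rw [h3]
          exact zero_mem _ }
    have hle : Algebra.adjoin R (AddMonoidAlgebra.of' R (Fin n → ℤ) '' D) ≤ S := by
      apply Algebra.adjoin_le
      rintro - ⟨d, hd, rfl⟩
      intro x hx
      have := Finsupp.support_single_subset hx
      rw [Finset.mem_singleton] at this
      rw [this]
      exact AddSubmonoid.subset_closure hd
    exact hle hf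
  · intro hsupp
    have hof : ∀ a ∈ AddSubmonoid.closure D, AddMonoidAlgebra.of' R (Fin n → ℤ) a ∈
        Algebra.adjoin R (AddMonoidAlgebra.of' R (Fin n → ℤ) '' D) := by
      intro a ha
      induction ha using AddSubmonoid.closure_induction with
      | mem x hx => exact Algebra.subset_adjoin ⟨x, hx, rfl⟩
      | zero =>
        have : AddMonoidAlgebra.of' R (Fin n → ℤ) 0 = 1 := AddMonoidAlgebra.one_def.symm
        rw [this]; exact one_mem _
      | add x y hx hy ihx ihy =>
        have : AddMonoidAlgebra.of' R (Fin n → ℤ) (x + y) =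
            AddMonoidAlgebra.of' R (Fin n → ℤ) x * AddMonoidAlgebra.of' R (Fin n → ℤ) y := by
          rw [AddMonoidAlgebra.of'_apply, AddMonoidAlgebra.of'_apply, AddMonoidAlgebra.of'_apply,
            AddMonoidAlgebra.single_mul_single, mul_one]
        rw [this]; exact mul_mem ihx ihy
    have hf : f = ∑ a ∈ f.coeff.support, AddMonoidAlgebra.single a (f.coeff a) := by
      conv_lhs => rw [← AddMonoidAlgebra.sum_coeff_single f]
      rfl
    rw [hf]
    apply Subalgebra.sum_mem
    intro a ha
    have h1 : (AddMonoidAlgebra.single a (f.coeff a) : AddMonoidAlgebra R (Fin n → ℤ)) =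
        f.coeff a • AddMonoidAlgebra.of' R (Fin n → ℤ) a := by
      rw [AddMonoidAlgebra.of'_apply, AddMonoidAlgebra.smul_single, smul_eq_mul, mul_one]
    rw [h1]
    exact Subalgebra.smul_mem _ (hof a (hsupp ha)) _

theorem qfc_sub_closure (D : Set (Fin n → ℤ)) :
    ∀ a ∈ AddSubgroup.closure D, ∃ m ∈ AddSubmonoid.closure D,
      ∃ m' ∈ AddSubmonoid.closure D, a = m - m' := by
  intro a ha
  induction ha using AddSubgroup.closure_induction with
  | mem x hx => exact ⟨x, AddSubmonoid.subset_closure hx, 0, zero_mem _, by simp⟩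
  | zero => exact ⟨0, zero_mem _, 0, zero_mem _, by simp⟩
  | add x y hx hy ihx ihy =>
    obtain ⟨m1, hm1, g1, hg1, h1⟩ := ihx
    obtain ⟨m2, hm2, g2, hg2, h2⟩ := ihy
    exact ⟨m1 + m2, add_mem hm1 hm2, g1 + g2, add_mem hg1 hg2, by rw [h1, h2]; abel⟩
  | neg x hx ihx =>
    obtain ⟨m1, hm1, g1, hg1, h1⟩ := ihx
    exact ⟨g1, hg1, m1, hm1, by rw [h1]; abel⟩

theorem qfc_M_le_G (D : Set (Fin n → ℤ)) :
    (AddSubmonoid.closure D : Set (Fin n → ℤ)) ⊆ ↑(AddSubgroup.closure D) := by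
  have : AddSubmonoid.closure D ≤ (AddSubgroup.closure D).toAddSubmonoid :=
    AddSubmonoid.closure_le.2 AddSubgroup.subset_closure
  exact this

theorem qfc_mem_locSet_iff (D : Set (Fin n → ℤ)) (f : AddMonoidAlgebra R (Fin n → ℤ)) :
    f ∈ locSet ((Algebra.adjoin R (AddMonoidAlgebra.of' R (Fin n → ℤ) '' D) :
        Subalgebra R (AddMonoidAlgebra R (Fin n → ℤ))) : Set (AddMonoidAlgebra R (Fin n → ℤ))) ↔
      ↑f.coeff.support ⊆ (AddSubgroup.closure D : Set (Fin n → ℤ)) := by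
  constructor
  · rintro ⟨s, hsA, hsu, hsf⟩
    obtain ⟨e, r, hr, rfl⟩ := qfc_unit_single hsu
    have heM : e ∈ AddSubmonoid.closure D := by
      have h := (qfc_mem_adjoin_iff D _).1 hsA
      apply h
      rw [AddMonoidAlgebra.coeff_single, Finsupp.support_single_ne_zero _ hr]
      exact Finset.mem_singleton_self e
    intro d hd
    have hd' : d ∈ f.coeff.support := hd
    have hmem : (e + d) ∈ (AddMonoidAlgebra.single e r * f).coeff.support := by
      rw [Finsupp.mem_support_iff, AddMonoidAlgebra.coeff_single_mul_apply]
      have : -e + (e + d) = d := by abel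
      rw [this]
      exact mul_ne_zero hr (Finsupp.mem_support_iff.1 hd')
    have hedM : (e + d) ∈ AddSubmonoid.closure D := (qfc_mem_adjoin_iff D _).1 hsf hmem
    have hrw : d = (e + d) - e := by abel
    rw [hrw]
    exact sub_mem (qfc_M_le_G D hedM) (qfc_M_le_G D heM)
  · intro hsupp
    by_cases hf0 : f = 0
    · refine ⟨1, ?_, isUnit_one, ?_⟩
      · exact one_mem _
      · rw [hf0, mul_zero]; exact zero_mem _
    · have hrep : ∀ d : Fin n → ℤ, ∃ m g : Fin n → ℤ, d ∈ AddSubgroup.closure D →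
          m ∈ AddSubmonoid.closure D ∧ g ∈ AddSubmonoid.closure D ∧ d = m - g := by
        intro d
        by_cases hd : d ∈ AddSubgroup.closure D
        · obtain ⟨m, hm, g, hg, h⟩ := qfc_sub_closure D d hd
          exact ⟨m, g, fun _ => ⟨hm, hg, h⟩⟩
        · exact ⟨0, 0, fun h => absurd h hd⟩
      choose m g hmg using hrep
      set E := ∑ d ∈ f.coeff.support, g d with hE
      have hgM : ∀ d ∈ f.coeff.support, g d ∈ AddSubmonoid.closure D :=
        fun d hd => (hmg d (hsupp hd)).2.1
      have hEM : E ∈ AddSubmonoid.closure D := AddSubmonoid.sum_mem _ (fun d hd => hgM d hd)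
      have hshift : ∀ d ∈ f.coeff.support, E + d ∈ AddSubmonoid.closure D := by
        intro d hd
        have h1 := hmg d (hsupp hd)
        have h2 : E = g d + ∑ d' ∈ f.coeff.support.erase d, g d' := (Finset.add_sum_erase _ _ hd).symm
        have h3 : E + d = m d + ∑ d' ∈ f.coeff.support.erase d, g d' := by
          have h5 : d + g d = m d := eq_sub_iff_add_eq.1 h1.2.2
          rw [h2, ← h5]
          abel
        rw [h3]
        exact add_mem h1.1
          (AddSubmonoid.sum_mem _ fun d' hd' => hgM d' (Finset.mem_of_mem_erase hd'))
      refine ⟨AddMonoidAlgebra.single E 1, ?_, ?_, ?_⟩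
      · apply (qfc_mem_adjoin_iff D _).2
        intro x hx
        have := Finsupp.support_single_subset hx
        rw [Finset.mem_singleton] at this
        rw [this]
        exact hEM
      · refine IsUnit.of_mul_eq_one (AddMonoidAlgebra.single (-E) 1) ?_
        have h := AddMonoidAlgebra.single_mul_single
          E (-E) (1:R) (1:R)
        rw [h]
        rw [add_neg_cancel, mul_one]
        exact AddMonoidAlgebra.one_def.symm
      · apply (qfc_mem_adjoin_iff D _).2
        intro y hy
        have hne : (AddMonoidAlgebra.single E (1:R) * f).coeff y ≠ 0 := Finsupp.mem_support_iff.1 hy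
        rw [AddMonoidAlgebra.coeff_single_mul_apply, one_mul] at hne
        have hmem : -E + y ∈ f.coeff.support := Finsupp.mem_support_iff.2 hne
        have := hshift _ hmem
        have hrw : E + (-E + y) = y := by abel
        rwa [hrw] at this

theorem qfc_duality (D : Set (Fin n → ℤ))
    (hsat : ∀ (c : Fin n → ℤ) (k : ℕ), 0 < k → k • c ∈ AddSubgroup.closure D →
      c ∈ AddSubgroup.closure D)
    {a : Fin n → ℤ} (ha : a ∉ AddSubgroup.closure D) :
    ∃ φ : (Fin n → ℤ) →+ ℤ, (∀ x ∈ AddSubgroup.closure D, φ x = 0) ∧ φ a ≠ 0 := by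
  set P : Submodule ℤ (Fin n → ℤ) := AddSubgroup.toIntSubmodule (AddSubgroup.closure D) with hP
  have hPmem : ∀ x : Fin n → ℤ, x ∈ P ↔ x ∈ AddSubgroup.closure D := by
    intro x; rw [hP]; exact Iff.rfl
  haveI : NoZeroSMulDivisors ℤ ((Fin n → ℤ) ⧸ P) := by
    constructor
    intro k x h
    by_cases hk : k = 0
    · exact Or.inl hk
    · right
      obtain ⟨y, rfl⟩ := Submodule.Quotient.mk_surjective P x
      have h1 : k • y ∈ P := by
        rwa [← Submodule.Quotient.mk_smul, Submodule.Quotient.mk_eq_zero] at h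
      have h2 : ((k.natAbs : ℤ)) • y ∈ P := by
        rcases Int.natAbs_eq k with he | he
        · rwa [← he]
        · rw [he, neg_smul] at h1
          simpa using neg_mem h1
      have h3 : (k.natAbs : ℕ) • y ∈ AddSubgroup.closure D := by
        rw [← hPmem]
        rwa [natCast_zsmul] at h2
      have h4 := hsat y k.natAbs (Int.natAbs_pos.2 hk) h3
      rw [Submodule.Quotient.mk_eq_zero]
      rwa [hPmem]
  haveI : Module.Free ℤ ((Fin n → ℤ) ⧸ P) := Module.free_of_finite_type_torsion_free'
  let b := Module.Free.chooseBasis ℤ ((Fin n → ℤ) ⧸ P)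
  have hmk : P.mkQ a ≠ 0 := by
    intro h0
    apply ha
    rw [← hPmem]
    rw [Submodule.mkQ_apply, Submodule.Quotient.mk_eq_zero] at h0
    exact h0
  obtain ⟨i, hi⟩ : ∃ i, b.repr (P.mkQ a) i ≠ 0 := by
    by_contra h
    push_neg at h
    apply hmk
    have h0 : b.repr (P.mkQ a) = 0 := Finsupp.ext h
    have := congrArg (b.repr.symm) h0
    rwa [LinearEquiv.symm_apply_apply, map_zero] at this
  refine ⟨((b.coord i).comp P.mkQ).toAddMonoidHom, ?_, ?_⟩
  · intro x hx
    have hx0 : P.mkQ x = 0 := by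
      rw [Submodule.mkQ_apply, Submodule.Quotient.mk_eq_zero, hPmem]
      exact hx
    simp [LinearMap.comp_apply, hx0]
  · simpa [LinearMap.comp_apply, Module.Basis.coord_apply] using hi

theorem qfc_cone_phi (D : Set (Fin n → ℤ)) (φ : (Fin n → ℤ) →+ ℤ)
    (hφ : ∀ x ∈ AddSubgroup.closure D, φ x = 0)
    {a : Fin n → ℤ}
    (ha : (fun i => (a i : ℝ)) ∈ coneOf ((AddSubgroup.closure D : Set (Fin n → ℤ)))) :
    φ a = 0 := by
  classical
  set Φ : (Fin n → ℝ) →ₗ[ℝ] ℝ :=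
    ∑ i : Fin n, (φ (Pi.single i 1) : ℝ) • LinearMap.proj i with hΦ
  have hΦapp : ∀ x : Fin n → ℝ, Φ x = ∑ i : Fin n, (φ (Pi.single i 1) : ℝ) * x i := by
    intro x
    rw [hΦ]
    simp [LinearMap.sum_apply, LinearMap.smul_apply, LinearMap.proj_apply, smul_eq_mul]
  have key1 : ∀ z : Fin n → ℤ, Φ (fun i => (z i : ℝ)) = (φ z : ℝ) := by
    intro z
    rw [hΦapp]
    have hsingle : ∀ i : Fin n, (Pi.single i (1:ℤ)) = fun j => if i = j then (1:ℤ) else 0 := by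
      intro i
      funext j
      rw [Pi.single_apply]
      exact if_congr eq_comm rfl rfl
    have hz : z = ∑ i : Fin n, z i • Pi.single i (1:ℤ) := by
      simp_rw [hsingle]
      exact pi_eq_sum_univ z
    have : φ z = ∑ i : Fin n, z i * φ (Pi.single i 1) := by
      conv_lhs => rw [hz]
      rw [map_sum]
      congr 1
      funext i
      rw [map_zsmul, smul_eq_mul]
    rw [this]
    push_cast
    congr 1
    funext i
    ring
  obtain ⟨c, hcsupp, hcnn, hceq⟩ := ha
  have h1 : Φ (fun i => (a i : ℝ)) = (φ a : ℝ) := key1 a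
  have h2 : Φ (fun i => (a i : ℝ)) = 0 := by
    rw [hceq, map_finsuppSum]
    rw [Finsupp.sum]
    apply Finset.sum_eq_zero
    intro g hg
    rw [map_smul, smul_eq_mul, key1 g]
    have : φ g = 0 := hφ g (hcsupp hg)
    rw [this]
    simp
  rw [h1] at h2
  exact_mod_cast h2

theorem qfc_cone_easy (D : Set (Fin n → ℤ)) {c : Fin n → ℤ} {k : ℕ} (hk : 0 < k)
    (h : k • c ∈ AddSubgroup.closure D) :
    (fun i => (c i : ℝ)) ∈ coneOf ((AddSubgroup.closure D : Set (Fin n → ℤ))) := by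
  classical
  refine ⟨Finsupp.single (k • c) (1/(k:ℝ)), ?_, ?_, ?_⟩
  · intro x hx
    have := Finsupp.support_single_subset hx
    rw [Finset.mem_singleton] at this
    rw [this]
    exact h
  · intro a
    rw [Finsupp.single_apply]
    split
    · positivity
    · exact le_refl 0
  · rw [Finsupp.sum_single_index (by simp)]
    funext i
    have hkne : (k:ℝ) ≠ 0 := Nat.cast_ne_zero.2 hk.ne'
    have : (k • c) i = (k : ℤ) * c i := by simp [Pi.smul_apply]
    simp only [Pi.smul_apply, smul_eq_mul, this]
    push_cast
    field_simp
    rw [nsmul_eq_mul]; push_cast; ring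

theorem qfc_single_isUnit (e : Fin n → ℤ) :
    IsUnit (AddMonoidAlgebra.single e (1:R)) := by
  refine IsUnit.of_mul_eq_one (AddMonoidAlgebra.single (-e) 1) ?_
  rw [AddMonoidAlgebra.single_mul_single, add_neg_cancel, mul_one]
  exact AddMonoidAlgebra.one_def.symm

end QfcAux

/-- For an `R`-subalgebra `A` of `B = R[x₁^{±1},…,xₙ^{±1}]` generated by monic monomials,
`A` is qfc in `B` iff `Gap(S⁻¹A) = ∅`, where `S = A ∩ B^×`. -/
theorem isQfc_iff_gapSet_loc_empty (R : Type*) [CommRing R] [IsDomain R] (n : ℕ) (hn : 1 ≤ n)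
    (A : Subalgebra R (AddMonoidAlgebra R (Fin n → ℤ)))
    (hgen : ∃ D : Set (Fin n → ℤ),
      A = Algebra.adjoin R (AddMonoidAlgebra.of' R (Fin n → ℤ) '' D)) :
    IsQfc A ↔ gapSet (locSet (A : Set (AddMonoidAlgebra R (Fin n → ℤ)))) = ∅ := by
  classical
  obtain ⟨D, rfl⟩ := hgen
  set A := Algebra.adjoin R (AddMonoidAlgebra.of' R (Fin n → ℤ) '' D) with hA
  set G := AddSubgroup.closure D with hG
  set M := AddSubmonoid.closure D with hM
  have hloc : ∀ f, f ∈ locSet (A : Set (AddMonoidAlgebra R (Fin n → ℤ))) ↔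
      ↑f.coeff.support ⊆ (G : Set (Fin n → ℤ)) := qfc_mem_locSet_iff D
  have hsuppSet : suppSet (locSet (A : Set (AddMonoidAlgebra R (Fin n → ℤ)))) =
      (G : Set (Fin n → ℤ)) := by
    ext x
    constructor
    · rintro ⟨f, hf, hx⟩
      exact (hloc f).1 hf hx
    · intro hx
      refine ⟨AddMonoidAlgebra.single x 1, (hloc _).2 ?_, ?_⟩
      · intro y hy
        have hy' := Finsupp.support_single_subset hy
        rw [Finset.mem_singleton] at hy'
        rw [hy']
        exact hx
      · rw [AddMonoidAlgebra.coeff_single, Finsupp.support_single_ne_zero _ (one_ne_zero (α := R))]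
        exact Finset.mem_singleton_self x
  have hmonSet : monSet (locSet (A : Set (AddMonoidAlgebra R (Fin n → ℤ)))) =
      (G : Set (Fin n → ℤ)) := by
    ext x
    constructor
    · intro hx
      apply (hloc _).1 hx
      rw [AddMonoidAlgebra.of'_apply, AddMonoidAlgebra.coeff_single, Finsupp.support_single_ne_zero _ (one_ne_zero (α := R))]
      exact Finset.mem_singleton_self x
    · intro hx
      show AddMonoidAlgebra.of' R (Fin n → ℤ) x ∈ locSet _
      apply (hloc _).2
      intro y hy
      rw [AddMonoidAlgebra.of'_apply] at hy
      have hy' := Finsupp.support_single_subset hy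
      rw [Finset.mem_singleton] at hy'
      rw [hy']
      exact hx
  constructor
  · -- qfc implies gap empty
    intro hqfc
    have hsat : ∀ (c : Fin n → ℤ) (k : ℕ), 0 < k → k • c ∈ G → c ∈ G := by
      intro c k hk hkc
      by_cases hc0 : c = 0
      · rw [hc0]; exact zero_mem _
      obtain ⟨m0, hm0, g0, hg0, hrep⟩ := qfc_sub_closure D _ hkc
      set a : AddMonoidAlgebra R (Fin n → ℤ) := AddMonoidAlgebra.single c 1 - 1 with haDef
      set F : ℕ → AddMonoidAlgebra R (Fin n → ℤ) :=
        fun j => AddMonoidAlgebra.single (g0 + j • c) 1 with hF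
      set b : AddMonoidAlgebra R (Fin n → ℤ) := ∑ j ∈ Finset.range k, F j with hbDef
      have hac : a.coeff c = 1 := by
        rw [haDef, AddMonoidAlgebra.coeff_sub, Finsupp.sub_apply, AddMonoidAlgebra.one_def, AddMonoidAlgebra.coeff_single, AddMonoidAlgebra.coeff_single, Finsupp.single_eq_same,
          Finsupp.single_eq_of_ne' (fun h => hc0 h.symm), sub_zero]
      have ha0' : a.coeff 0 = -1 := by
        rw [haDef, AddMonoidAlgebra.coeff_sub, Finsupp.sub_apply, AddMonoidAlgebra.one_def, AddMonoidAlgebra.coeff_single, AddMonoidAlgebra.coeff_single,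
          Finsupp.single_eq_of_ne' hc0, Finsupp.single_eq_same, zero_sub]
      have ha0 : a ≠ 0 := by
        intro h0
        rw [h0] at hac
        simp at hac
      have hb0 : b ≠ 0 := by
        intro h0
        have hbg0 : b.coeff g0 = 1 := by
          rw [hbDef, AddMonoidAlgebra.coeff_sum, Finsupp.finset_sum_apply]
          rw [Finset.sum_eq_single_of_mem 0 (Finset.mem_range.2 hk)]
          · rw [hF]
            simp
          · intro j hj hj0
            rw [hF]
            apply Finsupp.single_eq_of_ne'
            intro hEq
            have : j • c = 0 := add_eq_left.1 hEq
            apply hj0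
            by_contra hjne
            apply hc0
            funext i
            have hcomp : (j : ℤ) * c i = 0 := by
              have := congrFun this i
              simpa [Pi.smul_apply] using this
            rcases mul_eq_zero.1 hcomp with h | h
            · exact absurd (by exact_mod_cast h) hjne
            · exact h
        rw [h0] at hbg0
        simp at hbg0
      have hab : a * b = AddMonoidAlgebra.single (g0 + k • c) 1 - AddMonoidAlgebra.single g0 1 := by
        rw [hbDef, Finset.mul_sum]
        have hterm : ∀ j ∈ Finset.range k, a * F j = F (j+1) - F j := by
          intro j _
          rw [haDef, hF, sub_mul, one_mul, AddMonoidAlgebra.single_mul_single, one_mul]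
          congr 2
          rw [succ_nsmul]
          abel
        rw [Finset.sum_congr rfl hterm, Finset.sum_range_sub]
        rw [hF]
        simp
      have habA : a * b ∈ A := by
        apply (qfc_mem_adjoin_iff D _).2
        intro x hx
        rw [hab] at hx
        have := Finsupp.support_sub (f := (AddMonoidAlgebra.single (g0 + k • c) (1:R)).coeff)
          (g := (AddMonoidAlgebra.single g0 (1:R)).coeff) hx
        rw [Finset.mem_union] at this
        have hm0' : g0 + k • c = m0 := by
          rw [hrep]; abel
        rcases this with h | h
        · have h' := Finsupp.support_single_subset h
          rw [Finset.mem_singleton] at h'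
          rw [h', hm0']
          exact hm0
        · have h' := Finsupp.support_single_subset h
          rw [Finset.mem_singleton] at h'
          rw [h']
          exact hg0
      obtain ⟨u, v, huA, hvA⟩ := hqfc a b ha0 hb0 habA
      obtain ⟨e, r, hr, hue⟩ := qfc_unit_single (Units.isUnit u)
      have hsupp_ua := (qfc_mem_adjoin_iff D _).1 huA
      have hval : ∀ y : Fin n → ℤ, ((u : AddMonoidAlgebra R (Fin n → ℤ)) * a).coeff (e + y) = r * a.coeff y := by
        intro y
        rw [hue, AddMonoidAlgebra.coeff_single_mul_apply]
        congr 1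
        congr 1
        abel
      have hec : e + c ∈ M := by
        apply hsupp_ua
        apply Finset.mem_coe.2
        rw [Finsupp.mem_support_iff, hval c, hac, mul_one]
        exact hr
      have he : e ∈ M := by
        apply hsupp_ua
        have : ((u : AddMonoidAlgebra R (Fin n → ℤ)) * a).coeff e = -r := by
          have := hval 0
          rw [add_zero] at this
          rw [this, ha0']
          ring
        apply Finset.mem_coe.2
        rw [Finsupp.mem_support_iff, this]
        simpa using hr
      have : c = (e + c) - e := by abel
      rw [this]
      exact sub_mem (qfc_M_le_G D hec) (qfc_M_le_G D he)
    rw [Set.eq_empty_iff_forall_notMem]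
    rintro x ⟨hx1, hx2⟩
    rw [hmonSet] at hx2
    obtain ⟨φ, hφG, hφx⟩ := qfc_duality D hsat hx2
    apply hφx
    apply qfc_cone_phi D φ hφG
    have hx1' : (fun i => (x i : ℝ)) ∈ coneOf (suppSet (locSet
        (A : Set (AddMonoidAlgebra R (Fin n → ℤ))))) := hx1
    rwa [hsuppSet] at hx1'
  · -- gap empty implies qfc
    intro hgap
    have hG2 : ∀ x : Fin n → ℤ, (fun i => (x i : ℝ)) ∈ coneOf (G : Set (Fin n → ℤ)) → x ∈ G := by
      intro x hx
      by_contra hxG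
      have hxgap : x ∈ gapSet (locSet (A : Set (AddMonoidAlgebra R (Fin n → ℤ)))) := by
        constructor
        · show (fun i => (x i : ℝ)) ∈ coneOf (suppSet _)
          rw [hsuppSet]
          exact hx
        · rw [hmonSet]
          exact hxG
      rw [hgap] at hxgap
      exact hxgap
    have hsat : ∀ (c : Fin n → ℤ) (k : ℕ), 0 < k → k • c ∈ G → c ∈ G :=
      fun c k hk hkc => hG2 c (qfc_cone_easy D hk hkc)
    intro a b ha0 hb0 habA
    have hsuppab : ↑(a * b).coeff.support ⊆ (G : Set (Fin n → ℤ)) :=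
      fun d hd => qfc_M_le_G D ((qfc_mem_adjoin_iff D _).1 habA hd)
    have hstep : ∀ f g : AddMonoidAlgebra R (Fin n → ℤ), f ≠ 0 → g ≠ 0 → f * g = a * b →
        ∃ u : (AddMonoidAlgebra R (Fin n → ℤ))ˣ, (u : AddMonoidAlgebra R (Fin n → ℤ)) * f ∈ A := by
      intro f g hf hg hfg
      have hcoset : ∀ c ∈ f.coeff.support, ∀ c' ∈ f.coeff.support, c - c' ∈ G := by
        intro c hc c' hc'
        by_contra hcc
        obtain ⟨φ, hφG, hφ⟩ := qfc_duality D hsat hcc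
        have hconst := qfc_phi_const φ hf hg
          (fun d hd => hφG d (by rw [hfg] at hd; exact hsuppab hd)) hc hc'
        apply hφ
        rw [map_sub, hconst, sub_self]
      obtain ⟨c₀, hc₀⟩ := Finsupp.support_nonempty_iff.2 (mt AddMonoidAlgebra.coeff_eq_zero.1 hf)
      set f' : AddMonoidAlgebra R (Fin n → ℤ) := AddMonoidAlgebra.single (-c₀) 1 * f with hf'
      have hf'supp : ↑f'.coeff.support ⊆ (G : Set (Fin n → ℤ)) := by
        intro y hy
        have hne : f'.coeff y ≠ 0 := Finsupp.mem_support_iff.1 hy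
        rw [hf', AddMonoidAlgebra.coeff_single_mul_apply, one_mul] at hne
        have hmem : c₀ + y ∈ f.coeff.support := by
          rw [Finsupp.mem_support_iff]
          convert hne using 2
          abel
        have hyG := hcoset (c₀ + y) hmem c₀ hc₀
        have : (c₀ + y) - c₀ = y := by abel
        rwa [this] at hyG
      obtain ⟨s, hsA, hsu, hsf'⟩ := (hloc f').2 hf'supp
      refine ⟨hsu.unit * (qfc_single_isUnit (R := R) (-c₀)).unit, ?_⟩
      have hcoe : ((hsu.unit * (qfc_single_isUnit (R := R) (-c₀)).unit :
          (AddMonoidAlgebra R (Fin n → ℤ))ˣ) : AddMonoidAlgebra R (Fin n → ℤ)) =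
          s * AddMonoidAlgebra.single (-c₀) 1 := by
        rw [Units.val_mul, IsUnit.unit_spec, IsUnit.unit_spec]
      rw [hcoe, mul_assoc, ← hf']
      exact hsf'
    obtain ⟨u, hu⟩ := hstep a b ha0 hb0 rfl
    obtain ⟨v, hv⟩ := hstep b a hb0 ha0 (mul_comm b a)
    exact ⟨u, v, hu, hv⟩
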